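/- Let S = ℚ[x,y] ⧸ (x³ + x·y² + y³) with quotient map π, and set A₁ = Algebra.adjoin ℚ {π(x²), π(x·y)} and A₂ = Algebra.adjoin ℚ {π(x), π(y²)}. Then the intersection A₁ ⊓ A₂ equals Algebra.adjoin ℚ {π(x²), π(x²·y² + x·y³), π(y⁴), π(x·y³), π(y⁶), π(x·y⁵)}. -/

import Mathlib

open MvPolynomial

noncomputable section

namespace IntersectionExample

/-- The variable `x` in `ℚ[x,y]`. -/
def x : MvPolynomial (Fin 2) ℚ := X 0

/-- The variable `y` in `ℚ[x,y]`. -/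
def y : MvPolynomial (Fin 2) ℚ := X 1

/-- The quotient ring `S = ℚ[x,y] ⧸ (x³ + x·y² + y³)`. -/
abbrev S := MvPolynomial (Fin 2) ℚ ⧸ Ideal.span {x ^ 3 + x * y ^ 2 + y ^ 3}

/-- The quotient map `π : ℚ[x,y] → S`. -/
def π : MvPolynomial (Fin 2) ℚ →ₐ[ℚ] S := Ideal.Quotient.mkₐ ℚ _

/-- The subalgebra `A₁ = ℚ[x², xy]` of `S`. -/
def A₁ : Subalgebra ℚ S := Algebra.adjoin ℚ {π (x ^ 2), π (x * y)}

/-- The subalgebra `A₂ = ℚ[x, y²]` of `S`. -/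
def A₂ : Subalgebra ℚ S := Algebra.adjoin ℚ {π x, π (y ^ 2)}

def B : Subalgebra ℚ S :=
  Algebra.adjoin ℚ
    {π (x ^ 2), π (x ^ 2 * y ^ 2 + x * y ^ 3), π (y ^ 4), π (x * y ^ 3),
      π (y ^ 6), π (x * y ^ 5)}

lemma pi_congr (p q t : MvPolynomial (Fin 2) ℚ)
    (h : p - q = (x ^ 3 + x * y ^ 2 + y ^ 3) * t) : π p = π q := by
  have hmem : p - q ∈ Ideal.span {x ^ 3 + x * y ^ 2 + y ^ 3} :=
    Ideal.mem_span_singleton.mpr ⟨t, h⟩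
  simp only [π, Ideal.Quotient.mkₐ_eq_mk]
  exact Ideal.Quotient.eq.mpr hmem

lemma pi_red (a b : ℕ) :
    π (x ^ a * y ^ (b + 3)) = -π (x ^ (a + 3) * y ^ b) - π (x ^ (a + 1) * y ^ (b + 2)) := by
  have : π (x ^ a * y ^ (b + 3)) = π (-(x ^ (a + 3) * y ^ b) - x ^ (a + 1) * y ^ (b + 2)) := by
    apply pi_congr _ _ (x ^ a * y ^ b); ring
  rw [this, map_sub, map_neg]

lemma x2_mem_B : π (x ^ 2) ∈ B := Algebra.subset_adjoin (by simp)
lemma g2_mem_B : π (x ^ 2 * y ^ 2 + x * y ^ 3) ∈ B := Algebra.subset_adjoin (by simp)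
lemma y4_mem_B : π (y ^ 4) ∈ B := Algebra.subset_adjoin (by simp)
lemma xy3_mem_B : π (x * y ^ 3) ∈ B := Algebra.subset_adjoin (by simp)

lemma x2y2_mem_B : π (x ^ 2 * y ^ 2) ∈ B := by
  have h : (x ^ 2 * y ^ 2 : MvPolynomial (Fin 2) ℚ) = (x ^ 2 * y ^ 2 + x * y ^ 3) - x * y ^ 3 := by
    ring
  rw [h, map_sub]
  exact sub_mem g2_mem_B xy3_mem_B

lemma x3y_mem_B : π (x ^ 3 * y) ∈ B := by
  have h : π (x ^ 3 * y) = π (-(x * y ^ 3) - y ^ 4) := by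
    apply pi_congr _ _ y; ring
  rw [h, map_sub, map_neg]
  exact sub_mem (neg_mem xy3_mem_B) y4_mem_B

lemma x_pow_even_mem_B (k : ℕ) : π (x ^ (2 * k)) ∈ B := by
  have h : (x ^ (2 * k) : MvPolynomial (Fin 2) ℚ) = (x ^ 2) ^ k := by rw [← pow_mul]
  rw [h, map_pow]
  exact pow_mem x2_mem_B k

lemma mem_B_high : ∀ b a : ℕ, Even (a + b) → 4 ≤ a + b → π (x ^ a * y ^ b) ∈ B := by
  intro b
  induction b using Nat.strong_induction_on with
  | _ b IH =>
    match b with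
    | 0 =>
      intro a ha h4
      obtain ⟨k, hk⟩ := ha
      have hx : (x ^ a * y ^ 0 : MvPolynomial (Fin 2) ℚ) = x ^ (2 * k) := by
        rw [pow_zero, mul_one]; congr 1; omega
      rw [hx]; exact x_pow_even_mem_B k
    | 1 =>
      intro a ha h4
      obtain ⟨k, hk⟩ := ha
      have hk3 : a = 2 * (k - 2) + 3 := by omega
      have hx : (x ^ a * y ^ 1 : MvPolynomial (Fin 2) ℚ) = x ^ (2 * (k - 2)) * (x ^ 3 * y) := by
        rw [hk3]; ring
      rw [hx, map_mul]
      exact mul_mem (x_pow_even_mem_B _) x3y_mem_B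
    | 2 =>
      intro a ha h4
      obtain ⟨k, hk⟩ := ha
      have hk3 : a = 2 * (k - 2) + 2 := by omega
      have hx : (x ^ a * y ^ 2 : MvPolynomial (Fin 2) ℚ) = x ^ (2 * (k - 2)) * (x ^ 2 * y ^ 2) := by
        rw [hk3]; ring
      rw [hx, map_mul]
      exact mul_mem (x_pow_even_mem_B _) x2y2_mem_B
    | (b + 3) =>
      intro a ha h4
      rw [pi_red]
      refine sub_mem (neg_mem (IH b (by omega) (a + 3) ?_ ?_)) (IH (b + 2) (by omega) (a + 1) ?_ ?_)
      · obtain ⟨k, hk⟩ := ha; exact ⟨k, by omega⟩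
      · omega
      · obtain ⟨k, hk⟩ := ha; exact ⟨k, by omega⟩
      · omega

lemma mem_A₁_high : ∀ b a : ℕ, Even (a + b) → 4 ≤ a + b → π (x ^ a * y ^ b) ∈ A₁ := by
  have hx2 : π (x ^ 2) ∈ A₁ := Algebra.subset_adjoin (by simp)
  have hxy : π (x * y) ∈ A₁ := Algebra.subset_adjoin (by simp)
  have hxp : ∀ k : ℕ, π (x ^ (2 * k)) ∈ A₁ := by
    intro k
    have h : (x ^ (2 * k) : MvPolynomial (Fin 2) ℚ) = (x ^ 2) ^ k := by rw [← pow_mul]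
    rw [h, map_pow]; exact pow_mem hx2 k
  intro b
  induction b using Nat.strong_induction_on with
  | _ b IH =>
    match b with
    | 0 =>
      intro a ha h4
      obtain ⟨k, hk⟩ := ha
      have hx : (x ^ a * y ^ 0 : MvPolynomial (Fin 2) ℚ) = x ^ (2 * k) := by
        rw [pow_zero, mul_one]; congr 1; omega
      rw [hx]; exact hxp k
    | 1 =>
      intro a ha h4
      obtain ⟨k, hk⟩ := ha
      have hk3 : a = 2 * (k - 1) + 1 := by omega
      have hx : (x ^ a * y ^ 1 : MvPolynomial (Fin 2) ℚ) = x ^ (2 * (k - 1)) * (x * y) := by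
        rw [hk3]; ring
      rw [hx, map_mul]
      exact mul_mem (hxp _) hxy
    | 2 =>
      intro a ha h4
      obtain ⟨k, hk⟩ := ha
      have hk3 : a = 2 * (k - 2) + 2 := by omega
      have hx : (x ^ a * y ^ 2 : MvPolynomial (Fin 2) ℚ) = x ^ (2 * (k - 2)) * (x * y) ^ 2 := by
        rw [hk3]; ring
      rw [hx, map_mul, map_pow]
      exact mul_mem (hxp _) (pow_mem hxy 2)
    | (b + 3) =>
      intro a ha h4
      rw [pi_red]
      refine sub_mem (neg_mem (IH b (by omega) (a + 3) ?_ ?_)) (IH (b + 2) (by omega) (a + 1) ?_ ?_)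
      · obtain ⟨k, hk⟩ := ha; exact ⟨k, by omega⟩
      · omega
      · obtain ⟨k, hk⟩ := ha; exact ⟨k, by omega⟩
      · omega

lemma mem_A₂_aux : ∀ b a : ℕ, b ≠ 1 → π (x ^ a * y ^ b) ∈ A₂ := by
  have hx : π x ∈ A₂ := Algebra.subset_adjoin (by simp)
  have hy2 : π (y ^ 2) ∈ A₂ := Algebra.subset_adjoin (by simp)
  intro b
  induction b using Nat.strong_induction_on with
  | _ b IH =>
    intro a hb
    rcases Nat.even_or_odd b with ⟨k, hk⟩ | hodd
    · have h : (x ^ a * y ^ b : MvPolynomial (Fin 2) ℚ) = x ^ a * (y ^ 2) ^ k := by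
        rw [← pow_mul]; congr 2; omega
      rw [h, map_mul, map_pow, map_pow]
      exact mul_mem (pow_mem hx a) (pow_mem hy2 k)
    · have hb3 : ∃ b', b = b' + 3 := by
        rcases hodd with ⟨k, hk⟩; exact ⟨b - 3, by omega⟩
      obtain ⟨b', rfl⟩ := hb3
      rw [pi_red]
      refine sub_mem (neg_mem (IH b' (by omega) (a + 3) ?_)) (IH (b' + 2) (by omega) (a + 1) ?_)
      · rcases hodd with ⟨k, hk⟩; omega
      · omega


/-- Every monomial of an element of ℚ[x², xy] has even total degree and y-exp ≤ x-exp. -/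
lemma support_adjoin₁ (p : MvPolynomial (Fin 2) ℚ)
    (hp : p ∈ Algebra.adjoin ℚ ({x ^ 2, x * y} : Set (MvPolynomial (Fin 2) ℚ))) :
    ∀ m ∈ p.support, Even (m 0 + m 1) ∧ m 1 ≤ m 0 := by
  induction hp using Algebra.adjoin_induction with
  | mem g hg =>
    rcases hg with rfl | rfl
    · intro m hm
      rw [x, support_X_pow] at hm
      rw [Finset.mem_singleton] at hm
      subst hm
      simp [Finsupp.single_apply]
    · intro m hm
      have h := MvPolynomial.support_mul x y hm
      rw [Finset.mem_add] at h
      obtain ⟨u, hu, v, hv, rfl⟩ := h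
      rw [x, support_X, Finset.mem_singleton] at hu
      rw [y, support_X, Finset.mem_singleton] at hv
      subst hu; subst hv
      simp [Finsupp.single_apply]
  | algebraMap r =>
    intro m hm
    rw [algebraMap_eq, mem_support_iff, coeff_C] at hm
    split at hm
    · next h => subst h; simp
    · exact absurd rfl hm
  | add p q hp hq ihp ihq =>
    intro m hm
    rcases Finset.mem_union.mp (MvPolynomial.support_add hm) with h | h
    exacts [ihp m h, ihq m h]
  | mul p q hp hq ihp ihq =>
    intro m hm
    have h := MvPolynomial.support_mul p q hm
    rw [Finset.mem_add] at h
    obtain ⟨u, hu, v, hv, rfl⟩ := h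
    obtain ⟨h1, h2⟩ := ihp u hu
    obtain ⟨h3, h4⟩ := ihq v hv
    constructor
    · simp only [Finsupp.add_apply]
      rcases h1 with ⟨k, hk⟩; rcases h3 with ⟨l, hl⟩
      exact ⟨k + l, by omega⟩
    · simp only [Finsupp.add_apply]; omega

/-- Every monomial of an element of ℚ[x, y²] has even y-exponent. -/
lemma support_adjoin₂ (p : MvPolynomial (Fin 2) ℚ)
    (hp : p ∈ Algebra.adjoin ℚ ({x, y ^ 2} : Set (MvPolynomial (Fin 2) ℚ))) :
    ∀ m ∈ p.support, Even (m 1) := by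
  induction hp using Algebra.adjoin_induction with
  | mem g hg =>
    rcases hg with rfl | rfl
    · intro m hm
      rw [x, support_X, Finset.mem_singleton] at hm
      subst hm; simp [Finsupp.single_apply]
    · intro m hm
      rw [y, support_X_pow, Finset.mem_singleton] at hm
      subst hm; simp [Finsupp.single_apply]
  | algebraMap r =>
    intro m hm
    rw [algebraMap_eq, mem_support_iff, coeff_C] at hm
    split at hm
    · next h => subst h; simp
    · exact absurd rfl hm
  | add p q hp hq ihp ihq =>
    intro m hm
    rcases Finset.mem_union.mp (MvPolynomial.support_add hm) with h | h
    exacts [ihp m h, ihq m h]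
  | mul p q hp hq ihp ihq =>
    intro m hm
    have h := MvPolynomial.support_mul p q hm
    rw [Finset.mem_add] at h
    obtain ⟨u, hu, v, hv, rfl⟩ := h
    have h1 := ihp u hu
    have h2 := ihq v hv
    simp only [Finsupp.add_apply]
    exact h1.add h2

/-- The coefficient of xy in any multiple of f vanishes. -/
lemma coeff_xy_mul (t : MvPolynomial (Fin 2) ℚ) :
    coeff (Finsupp.single 0 1 + Finsupp.single 1 1)
      ((x ^ 3 + x * y ^ 2 + y ^ 3) * t) = 0 := by
  rw [coeff_mul]
  apply Finset.sum_eq_zero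
  rintro ⟨u, v⟩ huv
  rw [Finset.HasAntidiagonal.mem_antidiagonal] at huv
  have hu0 : u 0 ≤ 1 := by
    have := DFunLike.congr_fun huv (0 : Fin 2)
    simp [Finsupp.single_apply] at this
    omega
  have hu1 : u 1 ≤ 1 := by
    have := DFunLike.congr_fun huv (1 : Fin 2)
    simp [Finsupp.single_apply] at this
    omega
  have hf : coeff u (x ^ 3 + x * y ^ 2 + y ^ 3) = 0 := by
    have h1 : (x * y ^ 2 : MvPolynomial (Fin 2) ℚ)
        = monomial (Finsupp.single 0 1 + Finsupp.single 1 2) 1 := by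
      rw [x, y, show (X 0 : MvPolynomial (Fin 2) ℚ) = X 0 ^ 1 from (pow_one _).symm,
        X_pow_eq_monomial, X_pow_eq_monomial, monomial_mul, one_mul]
    rw [coeff_add, coeff_add, h1, coeff_monomial, x, y, coeff_X_pow, coeff_X_pow]
    rw [if_neg, if_neg, if_neg]
    · simp
    · intro h
      have := DFunLike.congr_fun h (1 : Fin 2)
      simp [Finsupp.single_apply] at this
      omega
    · intro h
      have := DFunLike.congr_fun h (1 : Fin 2)
      simp [Finsupp.single_apply] at this
      omega
    · intro h
      have := DFunLike.congr_fun h (0 : Fin 2)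
      simp [Finsupp.single_apply] at this
      omega
  rw [hf, zero_mul]


lemma monomial_eq' (m : Fin 2 →₀ ℕ) (c : ℚ) :
    (monomial m c : MvPolynomial (Fin 2) ℚ) = C c * (x ^ m 0 * y ^ m 1) := by
  rw [monomial_eq]
  congr 1
  rw [Finsupp.prod_fintype _ _ (fun i => pow_zero _), Fin.prod_univ_two]
  rfl

/-- The intersection `A₁ ⊓ A₂` equals the `ℚ`-subalgebra generated by the six listed
elements. -/
theorem inf_eq_adjoin :
    A₁ ⊓ A₂ =
      Algebra.adjoin ℚ
        {π (x ^ 2), π (x ^ 2 * y ^ 2 + x * y ^ 3), π (y ^ 4), π (x * y ^ 3),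
          π (y ^ 6), π (x * y ^ 5)} := by
  apply le_antisymm
  · -- hard direction
    intro s hs
    obtain ⟨h₁, h₂⟩ := Algebra.mem_inf.mp hs
    show s ∈ B
    rw [A₁, show ({π (x ^ 2), π (x * y)} : Set S) = π '' {x ^ 2, x * y} by
        rw [Set.image_insert_eq, Set.image_singleton],
      ← AlgHom.map_adjoin] at h₁
    rw [A₂, show ({π x, π (y ^ 2)} : Set S) = π '' {x, y ^ 2} by
        rw [Set.image_insert_eq, Set.image_singleton],
      ← AlgHom.map_adjoin] at h₂
    obtain ⟨p₁, hp₁mem, hp₁⟩ := Subalgebra.mem_map.mp h₁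
    obtain ⟨p₂, hp₂mem, hp₂⟩ := Subalgebra.mem_map.mp h₂
    have hdiff : p₁ - p₂ ∈ Ideal.span {x ^ 3 + x * y ^ 2 + y ^ 3} := by
      have heq : π p₁ = π p₂ := by rw [hp₁, hp₂]
      simp only [π, Ideal.Quotient.mkₐ_eq_mk] at heq
      exact Ideal.Quotient.eq.mp heq
    obtain ⟨t, ht⟩ := Ideal.mem_span_singleton.mp hdiff
    -- the coefficient of xy in p₁ vanishes
    have hc : coeff (Finsupp.single 0 1 + Finsupp.single 1 1) p₁ = 0 := by
      have h2 : coeff (Finsupp.single 0 1 + Finsupp.single 1 1) p₂ = 0 := by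
        by_contra h
        have hmem := support_adjoin₂ p₂ hp₂mem _ (mem_support_iff.mpr h)
        simp [Finsupp.single_apply] at hmem
      have h3 : coeff (Finsupp.single 0 1 + Finsupp.single 1 1) (p₁ - p₂) = 0 := by
        rw [ht]; exact coeff_xy_mul t
      rw [coeff_sub, h2, sub_zero] at h3
      exact h3
    -- decompose p₁ into monomials
    rw [← hp₁]
    have hrw : π p₁ = ∑ m ∈ p₁.support, π (monomial m (coeff m p₁)) := by
      conv_lhs => rw [as_sum p₁]
      rw [map_sum]
    rw [hrw]
    apply Subalgebra.sum_mem
    intro m hm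
    obtain ⟨hev, hle⟩ := support_adjoin₁ p₁ hp₁mem m hm
    rw [monomial_eq', map_mul]
    refine mul_mem ?_ ?_
    · have : π (C (coeff m p₁)) = algebraMap ℚ S (coeff m p₁) := by
        rw [← algebraMap_eq]; exact π.commutes _
      rw [this]
      exact Subalgebra.algebraMap_mem B _
    · have hcase : m 0 + m 1 = 0 ∨ m 0 + m 1 = 2 ∨ 4 ≤ m 0 + m 1 := by
        rcases hev with ⟨k, hk⟩; omega
      rcases hcase with h | h | h
      · have h0 : m 0 = 0 := by omega
        have h1 : m 1 = 0 := by omega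
        rw [h0, h1, pow_zero, pow_zero, mul_one, map_one]
        exact one_mem B
      · rcases Nat.lt_or_ge (m 1) 1 with hb | hb
        · -- (2, 0)
          have h0 : m 0 = 2 := by omega
          have h1 : m 1 = 0 := by omega
          rw [h0, h1, pow_zero, mul_one]
          exact x2_mem_B
        · -- (1, 1): contradiction with hc
          exfalso
          have h0 : m 0 = 1 := by omega
          have h1 : m 1 = 1 := by omega
          have hm' : m = Finsupp.single 0 1 + Finsupp.single 1 1 := by
            ext i
            fin_cases i
            · simpa [Finsupp.single_apply] using h0
            · simpa [Finsupp.single_apply] using h1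
          exact mem_support_iff.mp hm (hm' ▸ hc)
      · exact mem_B_high (m 1) (m 0) hev h
  · -- easy direction
    apply Algebra.adjoin_le
    rintro g hg
    simp only [Set.mem_insert_iff, Set.mem_singleton_iff] at hg
    have hx2 : (x ^ 2 : MvPolynomial (Fin 2) ℚ) = x ^ 2 * y ^ 0 := by ring
    have hxy3 : (x * y ^ 3 : MvPolynomial (Fin 2) ℚ) = x ^ 1 * y ^ 3 := by ring
    have hy4 : (y ^ 4 : MvPolynomial (Fin 2) ℚ) = x ^ 0 * y ^ 4 := by ring
    have hy6 : (y ^ 6 : MvPolynomial (Fin 2) ℚ) = x ^ 0 * y ^ 6 := by ring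
    have hxy5 : (x * y ^ 5 : MvPolynomial (Fin 2) ℚ) = x ^ 1 * y ^ 5 := by ring
    rcases hg with rfl | rfl | rfl | rfl | rfl | rfl <;> rw [SetLike.mem_coe, Algebra.mem_inf]
    · constructor
      · exact Algebra.subset_adjoin (by simp)
      · rw [hx2]; exact mem_A₂_aux 0 2 (by omega)
    · rw [map_add]
      constructor
      · exact add_mem (mem_A₁_high 2 2 ⟨2, rfl⟩ (by omega))
          (by rw [hxy3]; exact mem_A₁_high 3 1 ⟨2, rfl⟩ (by omega))
      · exact add_mem (mem_A₂_aux 2 2 (by omega))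
          (by rw [hxy3]; exact mem_A₂_aux 3 1 (by omega))
    · rw [hy4]
      exact ⟨mem_A₁_high 4 0 ⟨2, rfl⟩ (by omega), mem_A₂_aux 4 0 (by omega)⟩
    · rw [hxy3]
      exact ⟨mem_A₁_high 3 1 ⟨2, rfl⟩ (by omega), mem_A₂_aux 3 1 (by omega)⟩
    · rw [hy6]
      exact ⟨mem_A₁_high 6 0 ⟨3, rfl⟩ (by omega), mem_A₂_aux 6 0 (by omega)⟩
    · rw [hxy5]
      exact ⟨mem_A₁_high 5 1 ⟨3, rfl⟩ (by omega), mem_A₂_aux 5 1 (by omega)⟩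

end IntersectionExample
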